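/- Let λ > 0, c > 0, t > 0, and define F(u,t) = ∑_{k=0}^∞ (λ/(2c))^{2k} (c²t² − u²)^k / (k!)². Then ∫₀^{ct} (∂³F/∂t³)(u,t) du = (cλ²/2)(e^{λt} + e^{−λt}) − λ²c − λ⁴ c t²/8. -/

import Mathlib

/-- `F(u,t) = ∑_{k=0}^∞ (λ/(2c))^{2k} (c²t² − u²)^k / (k!)²`,
which equals `I₀((λ/c)√(c²t² − u²))` for `|u| ≤ ct`. -/
noncomputable def F (lam c u t : ℝ) : ℝ :=
  ∑' k : ℕ, (lam / (2 * c)) ^ (2 * k) * (c ^ 2 * t ^ 2 - u ^ 2) ^ k /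
    ((Nat.factorial k : ℝ)) ^ 2



lemma summable_cube_pow_div_factorial (q : ℝ) (hq : 0 ≤ q) :
    Summable (fun k : ℕ => (k:ℝ)^3 * q^k / k.factorial) := by
  refine Summable.of_nonneg_of_le (fun k => by positivity) (fun k => ?_)
    (Real.summable_pow_div_factorial (8*q))
  have h1 : (k:ℝ) ≤ 2^k := by exact_mod_cast (Nat.lt_two_pow_self (n := k)).le
  have h2 : (k:ℝ)^3 ≤ ((2:ℝ)^k)^3 := by
    exact pow_le_pow_left₀ (by positivity) h1 3
  have h3 : ((2:ℝ)^k)^3 = (8:ℝ)^k := by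
    rw [← pow_mul, mul_comm, pow_mul]; norm_num
  have h4 : (8*q)^k = 8^k * q^k := mul_pow _ _ _
  rw [h4]
  gcongr
  exact h3 ▸ h2

noncomputable def bb (r : ℝ) (k : ℕ) : ℝ := r ^ k / ((k.factorial : ℝ))^2

noncomputable def g1 (r c u : ℝ) (k : ℕ) (s : ℝ) : ℝ :=
  bb r k * ((k:ℝ) * (c^2*s^2-u^2)^(k-1) * (2*c^2*s))

noncomputable def Bnd (r c u R : ℝ) (k : ℕ) : ℝ :=
  4*(2*c^2*R+2*c^2+1)^3 * ((k:ℝ)^3 * ((r*(c^2*R^2+u^2+1))^k / (k.factorial:ℝ)))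

lemma cast_le_cube (k : ℕ) : (k:ℝ) ≤ (k:ℝ)^3 := by
  rcases Nat.eq_zero_or_pos k with h | h
  · simp [h]
  · have h1 : (1:ℝ) ≤ (k:ℝ) := by exact_mod_cast h
    calc (k:ℝ) = (k:ℝ)^1 := (pow_one _).symm
      _ ≤ (k:ℝ)^3 := pow_le_pow_right₀ h1 (by norm_num)

lemma cast_sq_le_cube (k : ℕ) : (k:ℝ)^2 ≤ (k:ℝ)^3 := by
  rcases Nat.eq_zero_or_pos k with h | h
  · simp [h]
  · have h1 : (1:ℝ) ≤ (k:ℝ) := by exact_mod_cast h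
    exact pow_le_pow_right₀ h1 (by norm_num)

lemma abs_mul2_le {a1 a2 b1 b2 : ℝ} (h1 : |a1| ≤ b1) (h2 : |a2| ≤ b2) :
    |a1*a2| ≤ b1*b2 := by
  rw [abs_mul]
  exact mul_le_mul h1 h2 (abs_nonneg _) ((abs_nonneg _).trans h1)

lemma abs_mul3_le {a1 a2 a3 b1 b2 b3 : ℝ} (h1 : |a1| ≤ b1) (h2 : |a2| ≤ b2) (h3 : |a3| ≤ b3) :
    |a1*a2*a3| ≤ b1*b2*b3 :=
  abs_mul2_le (abs_mul2_le h1 h2) h3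

section

variable {r c u R s : ℝ} {k : ℕ}

lemma bb_nonneg (hr : 0 ≤ r) (k : ℕ) : 0 ≤ bb r k := by unfold bb; positivity

lemma bbM_le (hr : 0 ≤ r) {M : ℝ} (hM1 : 1 ≤ M) (k : ℕ) :
    bb r k * M^k ≤ (r*M)^k / (k.factorial:ℝ) := by
  unfold bb
  rw [div_mul_eq_mul_div, ← mul_pow]
  have hfac : (1:ℝ) ≤ (k.factorial:ℝ) := by exact_mod_cast Nat.one_le_iff_ne_zero.mpr (Nat.factorial_ne_zero k)
  apply div_le_div_of_nonneg_left (by positivity) (by linarith) ?_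
  calc (k.factorial:ℝ) = k.factorial * 1 := by ring
    _ ≤ (k.factorial:ℝ) * k.factorial := by gcongr
    _ = (k.factorial:ℝ)^2 := (sq _).symm

lemma habs_cast_sub (k j : ℕ) : |((k-j:ℕ):ℝ)| ≤ (k:ℝ) := by
  rw [Nat.abs_cast]; exact_mod_cast Nat.sub_le k j

lemma habs_cast (k : ℕ) : |(k:ℝ)| ≤ (k:ℝ) := by rw [Nat.abs_cast]

lemma hX_bound (hs : |s| ≤ R) {e : ℕ} (he : e ≤ k) :
    |(c^2*s^2-u^2)^e| ≤ (c^2*R^2+u^2+1)^k := by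
  have h1 : s^2 ≤ R^2 := by
    rw [← sq_abs s, ← sq_abs R]
    exact pow_le_pow_left₀ (abs_nonneg s) (hs.trans (le_abs_self R)) 2
  have hXM : |c^2*s^2-u^2| ≤ c^2*R^2+u^2+1 := by
    rw [abs_sub_le_iff]
    constructor <;> nlinarith [sq_nonneg u, sq_nonneg s, mul_nonneg (sq_nonneg c) (sq_nonneg s), mul_nonneg (sq_nonneg c) (sq_nonneg R)]
  have hM1 : (1:ℝ) ≤ c^2*R^2+u^2+1 := by nlinarith [sq_nonneg (c*R), sq_nonneg u]
  rw [abs_pow]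
  calc |c^2*s^2-u^2|^e ≤ (c^2*R^2+u^2+1)^e :=
        pow_le_pow_left₀ (abs_nonneg _) hXM e
    _ ≤ (c^2*R^2+u^2+1)^k := pow_le_pow_right₀ hM1 he

lemma g1_bound (hr : 0 ≤ r) (hR : 0 ≤ R) (hs : |s| ≤ R) :
    |g1 r c u k s| ≤ Bnd r c u R k := by
  set M : ℝ := c^2*R^2+u^2+1 with hM
  set D : ℝ := 2*c^2*R+2*c^2+1 with hD
  have hM1 : (1:ℝ) ≤ M := by rw [hM]; nlinarith [sq_nonneg (c*R), sq_nonneg u]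
  have hD1 : (1:ℝ) ≤ D := by rw [hD]; nlinarith [sq_nonneg c, mul_nonneg (sq_nonneg c) hR]
  have hls : |2*c^2*s| ≤ D := by
    rw [abs_mul, abs_of_nonneg (by positivity : (0:ℝ) ≤ 2*c^2), hD]
    nlinarith [abs_nonneg s, sq_nonneg c]
  have hb := bb_nonneg hr k
  have step1 : |g1 r c u k s| ≤ bb r k * ((k:ℝ) * M^k * D) :=
    abs_mul2_le (abs_of_nonneg hb).le
      (abs_mul3_le (habs_cast k) (hX_bound hs (Nat.sub_le k 1)) hls)
  refine step1.trans ?_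
  have key : bb r k * ((k:ℝ) * M^k * D) = (bb r k * M^k) * ((k:ℝ) * D) := by ring
  rw [key]
  have h1 := bbM_le hr hM1 k
  have h2 : (k:ℝ) * D ≤ (k:ℝ)^3 * (4*D^3) := by
    have hD0 : (0:ℝ) ≤ D := by linarith
    have hD3 : D ≤ 4*D^3 := by nlinarith [sq_nonneg (D-1), sq_nonneg (D+1)]
    calc (k:ℝ)*D ≤ (k:ℝ)^3*D := mul_le_mul_of_nonneg_right (cast_le_cube k) hD0
      _ ≤ (k:ℝ)^3*(4*D^3) := mul_le_mul_of_nonneg_left hD3 (by positivity)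
  calc (bb r k * M^k) * ((k:ℝ)*D) ≤ ((r*M)^k / k.factorial) * ((k:ℝ)^3*(4*D^3)) :=
        mul_le_mul h1 h2 (by positivity) (by positivity)
    _ = Bnd r c u R k := by rw [hM, hD]; unfold Bnd; ring

end

noncomputable def g0 (r c u : ℝ) (k : ℕ) (s : ℝ) : ℝ := bb r k * (c^2*s^2-u^2)^k

noncomputable def g2 (r c u : ℝ) (k : ℕ) (s : ℝ) : ℝ :=
  bb r k * (((k:ℝ) * (((k-1:ℕ):ℝ) * (c^2*s^2-u^2)^(k-1-1) * (2*c^2*s))) * (2*c^2*s)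
    + ((k:ℝ) * (c^2*s^2-u^2)^(k-1)) * (2*c^2))

noncomputable def g3 (r c u : ℝ) (k : ℕ) (s : ℝ) : ℝ :=
  bb r k * (((k:ℝ) * ((((k-1:ℕ):ℝ) * ((((k-1-1:ℕ)):ℝ) * (c^2*s^2-u^2)^(k-1-1-1) * (2*c^2*s))) * (2*c^2*s)
        + (((k-1:ℕ):ℝ) * (c^2*s^2-u^2)^(k-1-1)) * (2*c^2))) * (2*c^2*s)
    + ((k:ℝ) * (((k-1:ℕ):ℝ) * (c^2*s^2-u^2)^(k-1-1) * (2*c^2*s))) * (2*c^2)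
    + ((k:ℝ) * (((k-1:ℕ):ℝ) * (c^2*s^2-u^2)^(k-1-1) * (2*c^2*s))) * (2*c^2))

section

variable {r c u R s : ℝ} {k : ℕ}

lemma g2_bound (hr : 0 ≤ r) (hR : 0 ≤ R) (hs : |s| ≤ R) :
    |g2 r c u k s| ≤ Bnd r c u R k := by
  set M : ℝ := c^2*R^2+u^2+1 with hM
  set D : ℝ := 2*c^2*R+2*c^2+1 with hD
  have hM1 : (1:ℝ) ≤ M := by rw [hM]; nlinarith [sq_nonneg (c*R), sq_nonneg u]
  have hD1 : (1:ℝ) ≤ D := by rw [hD]; nlinarith [sq_nonneg c, mul_nonneg (sq_nonneg c) hR]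
  have hD0 : (0:ℝ) ≤ D := by linarith
  have hls : |2*c^2*s| ≤ D := by
    rw [abs_mul, abs_of_nonneg (by positivity : (0:ℝ) ≤ 2*c^2), hD]
    nlinarith [abs_nonneg s, sq_nonneg c]
  have hlc : |2*c^2| ≤ D := by
    rw [abs_of_nonneg (by positivity : (0:ℝ) ≤ 2*c^2), hD]
    nlinarith [sq_nonneg c, mul_nonneg (sq_nonneg c) hR]
  have hb := bb_nonneg hr k
  have hT1 : |((k:ℝ) * (((k-1:ℕ):ℝ) * (c^2*s^2-u^2)^(k-1-1) * (2*c^2*s))) * (2*c^2*s)|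
      ≤ ((k:ℝ) * ((k:ℝ) * M^k * D)) * D :=
    abs_mul2_le (abs_mul2_le (habs_cast k)
      (abs_mul3_le (habs_cast_sub k 1) (hX_bound hs ((Nat.sub_le _ _).trans (Nat.sub_le _ _))) hls)) hls
  have hT2 : |((k:ℝ) * (c^2*s^2-u^2)^(k-1)) * (2*c^2)| ≤ ((k:ℝ) * M^k) * D :=
    abs_mul2_le (abs_mul2_le (habs_cast k) (hX_bound hs (Nat.sub_le _ _))) hlc
  have step1 : |g2 r c u k s| ≤ bb r k * (((k:ℝ) * ((k:ℝ) * M^k * D)) * D + ((k:ℝ) * M^k) * D) :=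
    abs_mul2_le (abs_of_nonneg hb).le ((abs_add_le _ _).trans (add_le_add hT1 hT2))
  refine step1.trans ?_
  have key : bb r k * (((k:ℝ) * ((k:ℝ) * M^k * D)) * D + ((k:ℝ) * M^k) * D)
      = (bb r k * M^k) * ((k:ℝ)^2*D^2 + (k:ℝ)*D) := by ring
  rw [key]
  have h1 := bbM_le hr hM1 k
  have hDD : D ≤ D^3 := by
    calc D = D^1 := (pow_one _).symm
      _ ≤ D^3 := pow_le_pow_right₀ hD1 (by norm_num)
  have hDD2 : D^2 ≤ D^3 := pow_le_pow_right₀ hD1 (by norm_num)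
  have hA : (k:ℝ)^2*D^2 ≤ (k:ℝ)^3*D^3 :=
    mul_le_mul (cast_sq_le_cube k) hDD2 (by positivity) (by positivity)
  have hB : (k:ℝ)*D ≤ (k:ℝ)^3*D^3 :=
    mul_le_mul (cast_le_cube k) hDD hD0 (by positivity)
  have h2 : (k:ℝ)^2*D^2 + (k:ℝ)*D ≤ (k:ℝ)^3*(4*D^3) := by nlinarith [pow_nonneg (Nat.cast_nonneg k : (0:ℝ) ≤ k) 3, pow_nonneg hD0 3]
  calc (bb r k * M^k) * ((k:ℝ)^2*D^2 + (k:ℝ)*D)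
      ≤ ((r*M)^k / k.factorial) * ((k:ℝ)^3*(4*D^3)) :=
        mul_le_mul h1 h2 (by positivity) (by positivity)
    _ = Bnd r c u R k := by rw [hM, hD]; unfold Bnd; ring

lemma g3_bound (hr : 0 ≤ r) (hR : 0 ≤ R) (hs : |s| ≤ R) :
    |g3 r c u k s| ≤ Bnd r c u R k := by
  set M : ℝ := c^2*R^2+u^2+1 with hM
  set D : ℝ := 2*c^2*R+2*c^2+1 with hD
  have hM1 : (1:ℝ) ≤ M := by rw [hM]; nlinarith [sq_nonneg (c*R), sq_nonneg u]
  have hD1 : (1:ℝ) ≤ D := by rw [hD]; nlinarith [sq_nonneg c, mul_nonneg (sq_nonneg c) hR]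
  have hD0 : (0:ℝ) ≤ D := by linarith
  have hls : |2*c^2*s| ≤ D := by
    rw [abs_mul, abs_of_nonneg (by positivity : (0:ℝ) ≤ 2*c^2), hD]
    nlinarith [abs_nonneg s, sq_nonneg c]
  have hlc : |2*c^2| ≤ D := by
    rw [abs_of_nonneg (by positivity : (0:ℝ) ≤ 2*c^2), hD]
    nlinarith [sq_nonneg c, mul_nonneg (sq_nonneg c) hR]
  have hb := bb_nonneg hr k
  have he3 : k-1-1-1 ≤ k := (Nat.sub_le _ _).trans ((Nat.sub_le _ _).trans (Nat.sub_le _ _))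
  have he2 : k-1-1 ≤ k := (Nat.sub_le _ _).trans (Nat.sub_le _ _)
  have hA1 : |(((k-1:ℕ):ℝ) * ((((k-1-1:ℕ)):ℝ) * (c^2*s^2-u^2)^(k-1-1-1) * (2*c^2*s))) * (2*c^2*s)|
      ≤ ((k:ℝ) * ((k:ℝ) * M^k * D)) * D :=
    abs_mul2_le (abs_mul2_le (habs_cast_sub k 1)
      (abs_mul3_le (habs_cast_sub k 2 |>.trans_eq (by norm_num) |>.trans (le_refl _)) (hX_bound hs he3) hls)) hls
  have hA2 : |(((k-1:ℕ):ℝ) * (c^2*s^2-u^2)^(k-1-1)) * (2*c^2)| ≤ ((k:ℝ) * M^k) * D :=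
    abs_mul2_le (abs_mul2_le (habs_cast_sub k 1) (hX_bound hs he2)) hlc
  have hS1 : |((k:ℝ) * ((((k-1:ℕ):ℝ) * ((((k-1-1:ℕ)):ℝ) * (c^2*s^2-u^2)^(k-1-1-1) * (2*c^2*s))) * (2*c^2*s)
        + (((k-1:ℕ):ℝ) * (c^2*s^2-u^2)^(k-1-1)) * (2*c^2))) * (2*c^2*s)|
      ≤ ((k:ℝ) * (((k:ℝ) * ((k:ℝ) * M^k * D)) * D + ((k:ℝ) * M^k) * D)) * D :=
    abs_mul2_le (abs_mul2_le (habs_cast k) ((abs_add_le _ _).trans (add_le_add hA1 hA2))) hls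
  have hS2 : |((k:ℝ) * (((k-1:ℕ):ℝ) * (c^2*s^2-u^2)^(k-1-1) * (2*c^2*s))) * (2*c^2)|
      ≤ ((k:ℝ) * ((k:ℝ) * M^k * D)) * D :=
    abs_mul2_le (abs_mul2_le (habs_cast k)
      (abs_mul3_le (habs_cast_sub k 1) (hX_bound hs he2) hls)) hlc
  have step1 : |g3 r c u k s| ≤ bb r k *
      (((k:ℝ) * (((k:ℝ) * ((k:ℝ) * M^k * D)) * D + ((k:ℝ) * M^k) * D)) * D
        + ((k:ℝ) * ((k:ℝ) * M^k * D)) * D + ((k:ℝ) * ((k:ℝ) * M^k * D)) * D) :=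
    abs_mul2_le (abs_of_nonneg hb).le
      ((abs_add_three _ _ _).trans (add_le_add (add_le_add hS1 hS2) hS2))
  refine step1.trans ?_
  have key : bb r k *
      (((k:ℝ) * (((k:ℝ) * ((k:ℝ) * M^k * D)) * D + ((k:ℝ) * M^k) * D)) * D
        + ((k:ℝ) * ((k:ℝ) * M^k * D)) * D + ((k:ℝ) * ((k:ℝ) * M^k * D)) * D)
      = (bb r k * M^k) * ((k:ℝ)^3*D^3 + (k:ℝ)^2*D^2 + 2*((k:ℝ)^2*D^2)) := by ring
  rw [key]
  have h1 := bbM_le hr hM1 k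
  have hDD2 : D^2 ≤ D^3 := pow_le_pow_right₀ hD1 (by norm_num)
  have hA : (k:ℝ)^2*D^2 ≤ (k:ℝ)^3*D^3 :=
    mul_le_mul (cast_sq_le_cube k) hDD2 (by positivity) (by positivity)
  have h2 : (k:ℝ)^3*D^3 + (k:ℝ)^2*D^2 + 2*((k:ℝ)^2*D^2) ≤ (k:ℝ)^3*(4*D^3) := by nlinarith []
  calc (bb r k * M^k) * ((k:ℝ)^3*D^3 + (k:ℝ)^2*D^2 + 2*((k:ℝ)^2*D^2))
      ≤ ((r*M)^k / k.factorial) * ((k:ℝ)^3*(4*D^3)) :=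
        mul_le_mul h1 h2 (by positivity) (by positivity)
    _ = Bnd r c u R k := by rw [hM, hD]; unfold Bnd; ring

lemma g0_summable (hr : 0 ≤ r) (hR : 0 ≤ R) (hs : |s| ≤ R) :
    Summable (fun k => g0 r c u k s) := by
  refine Summable.of_norm_bounded (g := fun k => (r*(c^2*R^2+u^2+1))^k / (k.factorial:ℝ))
    (Real.summable_pow_div_factorial _) (fun k => ?_)
  have hM1 : (1:ℝ) ≤ c^2*R^2+u^2+1 := by nlinarith [sq_nonneg (c*R), sq_nonneg u]
  have step : ‖g0 r c u k s‖ ≤ bb r k * (c^2*R^2+u^2+1)^k := by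
    rw [Real.norm_eq_abs]
    exact abs_mul2_le (abs_of_nonneg (bb_nonneg hr k)).le (hX_bound hs (le_refl k))
  exact step.trans (bbM_le hr hM1 k)

lemma Bnd_summable (hr : 0 ≤ r) : Summable (Bnd r c u R) := by
  have hq : (0:ℝ) ≤ r*(c^2*R^2+u^2+1) := by positivity
  have h := (summable_cube_pow_div_factorial _ hq).mul_left (4*(2*c^2*R+2*c^2+1)^3)
  exact h.congr (fun k => by unfold Bnd; ring)

end


section deriv
variable {r c u : ℝ} {k : ℕ}

lemma hasDerivAt_X (c u s : ℝ) : HasDerivAt (fun s : ℝ => c^2*s^2-u^2) (2*c^2*s) s := by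
  have := ((hasDerivAt_pow 2 s).const_mul (c^2)).sub_const (u^2)
  refine this.congr_deriv ?_
  simp; ring

lemma hasDerivAt_lin (c s : ℝ) : HasDerivAt (fun s : ℝ => 2*c^2*s) (2*c^2) s := by
  simpa using (hasDerivAt_id s).const_mul (2*c^2)

lemma hasDerivAt_g0 (s : ℝ) : HasDerivAt (fun s => g0 r c u k s) (g1 r c u k s) s :=
  (((hasDerivAt_X c u s).pow k).const_mul (bb r k))

lemma hasDerivAt_g1 (s : ℝ) : HasDerivAt (fun s => g1 r c u k s) (g2 r c u k s) s :=
  (((((hasDerivAt_X c u s).pow (k-1)).const_mul ((k:ℝ))).mul (hasDerivAt_lin c s)).const_mul (bb r k))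

lemma hasDerivAt_g2 (s : ℝ) : HasDerivAt (fun s => g2 r c u k s) (g3 r c u k s) s := by
  have hT1 := (((((hasDerivAt_X c u s).pow (k-1-1)).const_mul (((k-1:ℕ):ℝ))).mul
      (hasDerivAt_lin c s)).const_mul ((k:ℝ))).mul (hasDerivAt_lin c s)
  have hT2 := ((((hasDerivAt_X c u s).pow (k-1)).const_mul ((k:ℝ))).mul_const (2*c^2))
  exact ((hT1.add hT2).const_mul (bb r k))

end deriv

open Metric in
lemma key_deriv (r c u t : ℝ) (hr : 0 ≤ r) :
    iteratedDeriv 3 (fun s => ∑' k, g0 r c u k s) t = ∑' k, g3 r c u k t := by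
  set R : ℝ := |t| + 1 with hR
  have hR0 : (0:ℝ) ≤ R := by positivity
  have hRpos : (0:ℝ) < R := by positivity
  have hopen : IsOpen (ball (0:ℝ) R) := isOpen_ball
  have hconn : IsPreconnected (ball (0:ℝ) R) := (convex_ball (0:ℝ) R).isPreconnected
  have h0mem : (0:ℝ) ∈ ball (0:ℝ) R := by simp [hRpos]
  have htmem : t ∈ ball (0:ℝ) R := by
    rw [mem_ball, Real.dist_eq, sub_zero, hR]
    linarith
  have hmem_abs : ∀ y ∈ ball (0:ℝ) R, |y| ≤ R := by
    intro y hy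
    rw [mem_ball, Real.dist_eq, sub_zero] at hy
    exact hy.le
  have hBs : Summable (Bnd r c u R) := Bnd_summable hr
  -- Stage 1
  have E1 : ∀ y ∈ ball (0:ℝ) R,
      HasDerivAt (fun z => ∑' k, g0 r c u k z) (∑' k, g1 r c u k y) y := by
    intro y hy
    exact hasDerivAt_tsum_of_isPreconnected hBs hopen hconn
      (fun k z _ => hasDerivAt_g0 z)
      (fun k z hz => by
        rw [Real.norm_eq_abs]; exact g1_bound hr hR0 (hmem_abs z hz))
      h0mem (g0_summable hr hR0 (by simpa using hR0)) hy
  have habs0 : |(0:ℝ)| ≤ R := by simpa using hR0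
  have hg1sum : Summable (fun k => g1 r c u k 0) :=
    Summable.of_norm_bounded hBs (fun k => by
      rw [Real.norm_eq_abs]; exact g1_bound hr hR0 habs0)
  have hg2sum : Summable (fun k => g2 r c u k 0) :=
    Summable.of_norm_bounded hBs (fun k => by
      rw [Real.norm_eq_abs]; exact g2_bound hr hR0 habs0)
  -- Stage 2
  have E2 : ∀ y ∈ ball (0:ℝ) R,
      HasDerivAt (fun z => ∑' k, g1 r c u k z) (∑' k, g2 r c u k y) y := by
    intro y hy
    exact hasDerivAt_tsum_of_isPreconnected hBs hopen hconn
      (fun k z _ => hasDerivAt_g1 z)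
      (fun k z hz => by
        rw [Real.norm_eq_abs]; exact g2_bound hr hR0 (hmem_abs z hz))
      h0mem hg1sum hy
  -- Stage 3
  have E3 : ∀ y ∈ ball (0:ℝ) R,
      HasDerivAt (fun z => ∑' k, g2 r c u k z) (∑' k, g3 r c u k y) y := by
    intro y hy
    exact hasDerivAt_tsum_of_isPreconnected hBs hopen hconn
      (fun k z _ => hasDerivAt_g2 z)
      (fun k z hz => by
        rw [Real.norm_eq_abs]; exact g3_bound hr hR0 (hmem_abs z hz))
      h0mem hg2sum hy
  -- deriv equalities on the ball
  have D1 : Set.EqOn (deriv (fun z => ∑' k, g0 r c u k z)) (fun y => ∑' k, g1 r c u k y)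
      (ball (0:ℝ) R) := fun y hy => (E1 y hy).deriv
  have D2 : Set.EqOn (deriv (deriv (fun z => ∑' k, g0 r c u k z)))
      (fun y => ∑' k, g2 r c u k y) (ball (0:ℝ) R) := by
    intro y hy
    have hev : deriv (fun z => ∑' k, g0 r c u k z) =ᶠ[nhds y] (fun y => ∑' k, g1 r c u k y) :=
      Filter.eventuallyEq_of_mem (hopen.mem_nhds hy) D1
    rw [hev.deriv_eq]
    exact (E2 y hy).deriv
  have D3 : deriv (deriv (deriv (fun z => ∑' k, g0 r c u k z))) t = ∑' k, g3 r c u k t := by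
    have hev : deriv (deriv (fun z => ∑' k, g0 r c u k z)) =ᶠ[nhds t]
        (fun y => ∑' k, g2 r c u k y) :=
      Filter.eventuallyEq_of_mem (hopen.mem_nhds htmem) D2
    rw [hev.deriv_eq]
    exact (E3 t htmem).deriv
  rw [show (3:ℕ) = 2+1 from rfl, iteratedDeriv_succ, show (2:ℕ) = 1+1 from rfl,
    iteratedDeriv_succ, iteratedDeriv_one]
  exact D3


open scoped Nat in
lemma integral_pow_sq_sub (a : ℝ) (ha : 0 < a) (m : ℕ) :
    ∫ u in (0:ℝ)..a, (a^2 - u^2)^m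
      = a^(2*m+1) * 4^m * ((m.factorial:ℝ))^2 / ((2*m+1).factorial) := by
  induction m with
  | zero => simp
  | succ m ih =>
      have key : (∫ u in (0:ℝ)..a,
          ((2*(m:ℝ)+3) * (a^2-u^2)^(m+1) - (2*(m:ℝ)+2) * a^2 * (a^2-u^2)^m)) = 0 := by
        have hder : ∀ u ∈ Set.uIcc (0:ℝ) a, HasDerivAt (fun u : ℝ => u * (a^2-u^2)^(m+1))
            ((2*(m:ℝ)+3) * (a^2-u^2)^(m+1) - (2*(m:ℝ)+2) * a^2 * (a^2-u^2)^m) u := by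
          intro u _
          have h1 : HasDerivAt (fun u : ℝ => a^2 - u^2) (-(2*u)) u := by
            simpa using ((hasDerivAt_pow 2 u).const_sub (a^2))
          have h3 : HasDerivAt (fun u : ℝ => u * (a^2-u^2)^(m+1))
              (1 * (a^2-u^2)^(m+1) + u * ((↑(m+1) * (a^2-u^2)^(m+1-1)) * (-(2*u)))) u :=
            (hasDerivAt_id u).mul (h1.pow (m+1))
          convert h3 using 1
          have hp : (a^2-u^2)^(m+1) = (a^2-u^2)^m * (a^2-u^2) := pow_succ _ _
          simp only [Nat.add_sub_cancel, hp]
          push_cast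
          ring
        have hcont : IntervalIntegrable (fun u : ℝ =>
            (2*(m:ℝ)+3) * (a^2-u^2)^(m+1) - (2*(m:ℝ)+2) * a^2 * (a^2-u^2)^m)
            MeasureTheory.volume 0 a := by
          apply Continuous.intervalIntegrable; continuity
        rw [intervalIntegral.integral_eq_sub_of_hasDerivAt hder hcont]
        simp
      have hint1 : IntervalIntegrable (fun u : ℝ => (a^2-u^2)^(m+1)) MeasureTheory.volume 0 a := by
        apply Continuous.intervalIntegrable; continuity
      have hint2 : IntervalIntegrable (fun u : ℝ => (a^2-u^2)^m) MeasureTheory.volume 0 a := by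
        apply Continuous.intervalIntegrable; continuity
      have split : (∫ u in (0:ℝ)..a,
          ((2*(m:ℝ)+3) * (a^2-u^2)^(m+1) - (2*(m:ℝ)+2) * a^2 * (a^2-u^2)^m))
          = (2*(m:ℝ)+3) * (∫ u in (0:ℝ)..a, (a^2-u^2)^(m+1))
            - (2*(m:ℝ)+2) * a^2 * (∫ u in (0:ℝ)..a, (a^2-u^2)^m) := by
        rw [intervalIntegral.integral_sub (hint1.const_mul _) (hint2.const_mul _),
          intervalIntegral.integral_const_mul, intervalIntegral.integral_const_mul]
      rw [key] at split
      have h23 : (2*(m:ℝ)+3) ≠ 0 := by positivity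
      have hI : (∫ u in (0:ℝ)..a, (a^2-u^2)^(m+1))
          = (2*(m:ℝ)+2) * a^2 * (∫ u in (0:ℝ)..a, (a^2-u^2)^m) / (2*(m:ℝ)+3) := by
        field_simp at split ⊢
        linarith [split]
      rw [hI, ih]
      have hf1 : ((m+1).factorial : ℝ) = (m+1) * m.factorial := by
        push_cast [Nat.factorial_succ]; ring
      have hf2 : ((2*(m+1)+1).factorial : ℝ) = (2*(m:ℝ)+3) * (2*(m:ℝ)+2) * ((2*m+1).factorial) := by
        have : 2*(m+1)+1 = (2*m+1) + 1 + 1 := by ring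
        rw [this, Nat.factorial_succ, Nat.factorial_succ]
        push_cast; ring
      have hfz : ((2*m+1).factorial : ℝ) ≠ 0 := by positivity
      have haz : a ≠ 0 := ne_of_gt ha
      rw [hf1, hf2]
      have hp : a^(2*(m+1)+1) = a^(2*m+1) * a^2 := by rw [← pow_add]; ring_nf
      rw [hp]
      field_simp
      ring


lemma term_identity (lam c t : ℝ) (hc : 0 < c) (j : ℕ) :
    ((lam/(2*c))^2)^(j+3) / (((j+3).factorial:ℝ))^2 * (((j+3:ℕ):ℝ)*((j+2:ℕ):ℝ)*((j+1:ℕ):ℝ)*8*c^6*t^3)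
        * ((c*t)^(2*j+1) * 4^j * ((j.factorial:ℝ))^2 / ((2*j+1).factorial))
      + ((lam/(2*c))^2)^(j+3) / (((j+3).factorial:ℝ))^2 * (((j+3:ℕ):ℝ)*((j+2:ℕ):ℝ)*12*c^4*t)
        * ((c*t)^(2*(j+1)+1) * 4^(j+1) * (((j+1).factorial:ℝ))^2 / ((2*(j+1)+1).factorial))
      = c*lam^2*((lam*t)^(2*(j+2))/((2*(j+2)).factorial)) := by
  have f1 : ((j+3).factorial:ℝ) = ((j:ℝ)+3)*((j:ℝ)+2)*((j:ℝ)+1)*(j.factorial) := by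
    show (((j+2)+1).factorial:ℝ) = _
    rw [Nat.factorial_succ, Nat.factorial_succ, Nat.factorial_succ]
    push_cast; ring
  have f2 : ((j+1).factorial:ℝ) = ((j:ℝ)+1)*j.factorial := by
    rw [Nat.factorial_succ]; push_cast; ring
  have f3 : ((2*(j+1)+1).factorial:ℝ) = (2*(j:ℝ)+3)*(2*(j:ℝ)+2)*((2*j+1).factorial) := by
    show (((2*j+1)+1+1).factorial:ℝ) = _
    rw [Nat.factorial_succ, Nat.factorial_succ]
    push_cast; ring
  have f4 : ((2*(j+2)).factorial:ℝ) = (2*(j:ℝ)+4)*(2*(j:ℝ)+3)*(2*(j:ℝ)+2)*((2*j+1).factorial) := by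
    show (((2*j+1)+1+1+1).factorial:ℝ) = _
    rw [Nat.factorial_succ, Nat.factorial_succ, Nat.factorial_succ]
    push_cast; ring
  have hfj : (0:ℝ) < j.factorial := by exact_mod_cast j.factorial_pos
  have hf2j : (0:ℝ) < ((2*j+1).factorial:ℝ) := by exact_mod_cast (2*j+1).factorial_pos
  have hrdef : ((lam/(2*c))^2) = lam^2/(4*c^2) := by rw [div_pow, mul_pow]; norm_num
  rw [hrdef, f1, f2, f3, f4]
  push_cast
  rw [div_pow, mul_pow]
  field_simp
  ring



theorem integral_d3F_dt3
    (lam c t : ℝ) (hlam : 0 < lam) (hc : 0 < c) (ht : 0 < t) :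
    ∫ u in (0 : ℝ)..(c * t), iteratedDeriv 3 (fun s => F lam c u s) t =
      c * lam ^ 2 / 2 * (Real.exp (lam * t) + Real.exp (-(lam * t))) - lam ^ 2 * c -
        lam ^ 4 * c * t ^ 2 / 8 := by
  set r : ℝ := (lam/(2*c))^2 with hrdef
  have hr : 0 ≤ r := sq_nonneg _
  set a : ℝ := c*t with hadef
  have ha : 0 < a := by positivity
  -- rewrite F as tsum of g0
  have hFg0 : ∀ u : ℝ, (fun s => F lam c u s) = fun s => ∑' k, g0 r c u k s := by
    intro u
    funext s
    unfold F
    exact tsum_congr fun k => by rw [pow_mul]; simp only [g0, bb]; ring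
  -- pointwise value of the third derivative
  have hptw : ∀ u : ℝ, iteratedDeriv 3 (fun s => F lam c u s) t = ∑' k, g3 r c u k t := by
    intro u
    rw [hFg0 u]
    exact key_deriv r c u t hr
  rw [intervalIntegral.integral_congr
    (g := fun u => ∑' k, g3 r c u k t) (fun u _ => hptw u)]
  rw [intervalIntegral.integral_of_le ha.le]
  -- swap integral and sum
  have hcont : ∀ k, Continuous (fun u => g3 r c u k t) := by
    intro k
    unfold g3
    fun_prop
  have hint : ∀ k, MeasureTheory.Integrable (fun u => g3 r c u k t)
      (MeasureTheory.volume.restrict (Set.Ioc 0 a)) :=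
    fun k => ((hcont k).integrableOn_Ioc)
  set R : ℝ := |t| + 1 with hRdef
  have hR0 : (0:ℝ) ≤ R := by positivity
  have htR : |t| ≤ R := by rw [hRdef]; linarith
  have hBmono : ∀ (u : ℝ) (k : ℕ), u ∈ Set.Ioc (0:ℝ) a → Bnd r c u R k ≤ Bnd r c a R k := by
    intro u k hu
    have hu2 : u^2 ≤ a^2 := by nlinarith [hu.1, hu.2]
    have hbase : r*(c^2*R^2+u^2+1) ≤ r*(c^2*R^2+a^2+1) :=
      mul_le_mul_of_nonneg_left (by nlinarith) hr
    unfold Bnd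
    gcongr
    all_goals first | positivity | exact hbase
  have hnorm : Summable (fun k => ∫ u in Set.Ioc (0:ℝ) a, ‖g3 r c u k t‖) := by
    refine Summable.of_nonneg_of_le (f := fun k => Bnd r c a R k * a)
      (g := fun k => ∫ u in Set.Ioc (0:ℝ) a, ‖g3 r c u k t‖)
      (fun k => MeasureTheory.integral_nonneg fun u => norm_nonneg _)
      (fun k => ?_) ((Bnd_summable hr).mul_right a)
    have hbd : ∀ u ∈ Set.Ioc (0:ℝ) a, ‖g3 r c u k t‖ ≤ Bnd r c a R k := by
      intro u hu
      rw [Real.norm_eq_abs]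
      exact (g3_bound hr hR0 htR).trans (hBmono u k hu)
    calc (∫ u in Set.Ioc (0:ℝ) a, ‖g3 r c u k t‖)
        ≤ ∫ _u in Set.Ioc (0:ℝ) a, Bnd r c a R k := by
          apply MeasureTheory.setIntegral_mono_on (hint k).norm
            (MeasureTheory.integrableOn_const (by simp [Real.volume_Ioc]))
            measurableSet_Ioc hbd
      _ = Bnd r c a R k * a := by
          rw [MeasureTheory.setIntegral_const]
          simp [Real.volume_Ioc, ENNReal.toReal_ofReal ha.le, mul_comm, ha.le]
  rw [← MeasureTheory.integral_tsum_of_summable_integral_norm hint hnorm]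
  -- back to interval integrals
  have hback : ∀ k, (∫ u in Set.Ioc (0:ℝ) a, g3 r c u k t)
      = ∫ u in (0:ℝ)..a, g3 r c u k t :=
    fun k => (intervalIntegral.integral_of_le ha.le).symm
  rw [tsum_congr hback]
  -- compute each integral
  have hii : ∀ (A : ℝ) (m : ℕ), IntervalIntegrable (fun u : ℝ => A * ((c*t)^2 - u^2)^m)
      MeasureTheory.volume 0 a := by
    intro A m
    apply Continuous.intervalIntegrable
    fun_prop
  have hterm3 : ∀ j : ℕ, (∫ u in (0:ℝ)..a, g3 r c u (j+3) t)
      = c*lam^2*((lam*t)^(2*(j+2))/((2*(j+2)).factorial)) := by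
    intro j
    have hptw2 : (fun u : ℝ => g3 r c u (j+3) t) = fun u =>
        (bb r (j+3) * (((j+3:ℕ):ℝ)*((j+2:ℕ):ℝ)*((j+1:ℕ):ℝ)*8*c^6*t^3)) * ((c*t)^2 - u^2)^j
        + (bb r (j+3) * (((j+3:ℕ):ℝ)*((j+2:ℕ):ℝ)*12*c^4*t)) * ((c*t)^2 - u^2)^(j+1) := by
      funext u
      show bb r (j+3) * ((((j+3:ℕ):ℝ) * ((((j+2:ℕ):ℝ) * ((((j+1:ℕ)):ℝ) * (c^2*t^2-u^2)^j * (2*c^2*t))) * (2*c^2*t)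
            + (((j+2:ℕ):ℝ) * (c^2*t^2-u^2)^(j+1)) * (2*c^2))) * (2*c^2*t)
          + (((j+3:ℕ):ℝ) * ((((j+2:ℕ)):ℝ) * (c^2*t^2-u^2)^(j+1) * (2*c^2*t))) * (2*c^2)
          + (((j+3:ℕ):ℝ) * ((((j+2:ℕ)):ℝ) * (c^2*t^2-u^2)^(j+1) * (2*c^2*t))) * (2*c^2))
        = (bb r (j+3) * (((j+3:ℕ):ℝ)*((j+2:ℕ):ℝ)*((j+1:ℕ):ℝ)*8*c^6*t^3)) * ((c*t)^2 - u^2)^j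
        + (bb r (j+3) * (((j+3:ℕ):ℝ)*((j+2:ℕ):ℝ)*12*c^4*t)) * ((c*t)^2 - u^2)^(j+1)
      push_cast
      ring
    rw [hptw2, intervalIntegral.integral_add (hii _ j) (hii _ (j+1)),
      intervalIntegral.integral_const_mul, intervalIntegral.integral_const_mul,
      integral_pow_sq_sub a ha j, integral_pow_sq_sub a ha (j+1)]
    have := term_identity lam c t hc j
    rw [hadef]
    simp only [bb, hrdef]
    linear_combination this
  have h0 : (∫ u in (0:ℝ)..a, g3 r c u 0 t) = 0 := by
    have : (fun u : ℝ => g3 r c u 0 t) = fun _ => (0:ℝ) := by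
      funext u; simp [g3]
    rw [this]; simp
  have h1 : (∫ u in (0:ℝ)..a, g3 r c u 1 t) = 0 := by
    have : (fun u : ℝ => g3 r c u 1 t) = fun _ => (0:ℝ) := by
      funext u; simp [g3]
    rw [this]; simp
  have h2 : (∫ u in (0:ℝ)..a, g3 r c u 2 t) = 3/8*lam^4*c*t^2 := by
    have hv : (fun u : ℝ => g3 r c u 2 t) = fun _ => bb r 2 * (24*c^4*t) := by
      funext u
      show bb r 2 * ((((2:ℕ):ℝ) * ((((1:ℕ):ℝ) * ((((0:ℕ)):ℝ) * (c^2*t^2-u^2)^0 * (2*c^2*t))) * (2*c^2*t)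
            + (((1:ℕ):ℝ) * (c^2*t^2-u^2)^0) * (2*c^2))) * (2*c^2*t)
          + (((2:ℕ):ℝ) * ((((1:ℕ)):ℝ) * (c^2*t^2-u^2)^0 * (2*c^2*t))) * (2*c^2)
          + (((2:ℕ):ℝ) * ((((1:ℕ)):ℝ) * (c^2*t^2-u^2)^0 * (2*c^2*t))) * (2*c^2))
        = bb r 2 * (24*c^4*t)
      push_cast
      ring
    rw [hv, intervalIntegral.integral_const]
    have hbb2 : bb r 2 = r^2/4 := by
      simp [bb]; norm_num [Nat.factorial]
    rw [hbb2, hrdef, hadef]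
    have hcne : c ≠ 0 := ne_of_gt hc
    field_simp
    ring
  -- the series
  have hcosh := Real.hasSum_cosh (lam*t)
  have hS : ∑ i ∈ Finset.range 2, (lam*t)^(2*i)/(((2*i).factorial:ℝ)) = 1 + (lam*t)^2/2 := by
    norm_num [Finset.sum_range_succ, Nat.factorial]
  have hshift : HasSum (fun n : ℕ => (lam*t)^(2*(n+2))/(((2*(n+2)).factorial:ℝ)))
      (Real.cosh (lam*t) - (1 + (lam*t)^2/2)) := by
    refine (hasSum_nat_add_iff (f := fun n : ℕ => (lam*t)^(2*n)/(((2*n).factorial:ℝ))) 2).mpr ?_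
    rw [hS, sub_add_cancel]
    exact hcosh
  have hmul := hshift.mul_left (c*lam^2)
  have hfinal : HasSum (fun k => ∫ u in (0:ℝ)..a, g3 r c u k t)
      ((c*lam^2*(Real.cosh (lam*t) - (1 + (lam*t)^2/2)))
        + ∑ i ∈ Finset.range 3, ∫ u in (0:ℝ)..a, g3 r c u i t) := by
    refine (hasSum_nat_add_iff 3).mp ?_
    simp only [hterm3]
    exact hmul
  rw [hfinal.tsum_eq, Finset.sum_range_succ, Finset.sum_range_succ, Finset.sum_range_one,
    h0, h1, h2, Real.cosh_eq]
  ring
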